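/- Let (Ω, μ) be a probability space, N, M ≥ 1 natural numbers, and ε, δ ≥ 0 reals. Let h̄ : Fin N → ℂ with ‖h̄ n‖ = 1 for all n, let a : Fin N → ℂ and b : Fin M → ℂ with ‖a n‖ = 1 and ‖b m‖ = 1 for all n, m, and let θ : Fin N → ℝ define Θ = diag(e^{iθ_1}, …, e^{iθ_N}). Let h̃ : Ω → (Fin N → ℂ) and G̃ : Ω → Matrix (Fin N) (Fin M) ℂ be random, independent of each other (IndepFun), with all entries and entry products integrable, zero mean (∫ h̃(ω) n dμ = 0, ∫ G̃(ω) n m dμ = 0), and second moments ∫ h̃(ω) n · conj(h̃(ω) n') dμ = δ_{nn'} and ∫ G̃(ω) n m · conj(G̃(ω) n' m') dμ = δ_{(n,m),(n',m')}, and additionally ∫ h̃(ω) n · h̃(ω) n' dμ = 0 for n ≠ n' and ∫ G̃(ω) n m · G̃(ω) n' m' dμ = 0 for (n,m) ≠ (n',m'). Define the Rician channels h(ω) = √(ε/(ε+1))·h̄ + √(1/(ε+1))·h̃(ω) and G(ω) = √(δ/(δ+1))·(a bᴴ) + √(1/(δ+1))·G̃(ω). Then ∫ ∑_{m} ‖∑_{n}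 conj(h(ω) n) · e^{iθ n} · (G(ω) n m)‖² dμ = γ₁ · ‖∑_{n} conj(h̄ n) · e^{iθ n} · a n‖² · M + γ₂ · M · N, where γ₁ = εδ/((ε+1)(δ+1)) and γ₂ = 1 − γ₁. -/

import Mathlib

open MeasureTheory

open ProbabilityTheory in
lemma indep_integral_mul_c {Ω : Type*} [MeasurableSpace Ω] {μ : Measure Ω}
    {X Y : Ω → ℂ} (hXY : IndepFun X Y μ) (hX : Integrable X μ) (hY : Integrable Y μ) :
    ∫ ω, X ω * Y ω ∂μ = (∫ ω, X ω ∂μ) * ∫ ω, Y ω ∂μ := by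
  have hXr : Integrable (fun ω => (X ω).re) μ := by simpa [RCLike.re_to_complex] using hX.re
  have hXi : Integrable (fun ω => (X ω).im) μ := by simpa [RCLike.im_to_complex] using hX.im
  have hYr : Integrable (fun ω => (Y ω).re) μ := by simpa [RCLike.re_to_complex] using hY.re
  have hYi : Integrable (fun ω => (Y ω).im) μ := by simpa [RCLike.im_to_complex] using hY.im
  have hrr : IndepFun (fun ω => (X ω).re) (fun ω => (Y ω).re) μ :=
    hXY.comp Complex.measurable_re Complex.measurable_re
  have hri : IndepFun (fun ω => (X ω).re) (fun ω => (Y ω).im) μ :=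
    hXY.comp Complex.measurable_re Complex.measurable_im
  have hir : IndepFun (fun ω => (X ω).im) (fun ω => (Y ω).re) μ :=
    hXY.comp Complex.measurable_im Complex.measurable_re
  have hii : IndepFun (fun ω => (X ω).im) (fun ω => (Y ω).im) μ :=
    hXY.comp Complex.measurable_im Complex.measurable_im
  have irr : Integrable (fun ω => (X ω).re * (Y ω).re) μ := by
    exact hrr.integrable_mul hXr hYr
  have iri : Integrable (fun ω => (X ω).re * (Y ω).im) μ := by
    exact hri.integrable_mul hXr hYi
  have iir : Integrable (fun ω => (X ω).im * (Y ω).re) μ := by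
    exact hir.integrable_mul hXi hYr
  have iii : Integrable (fun ω => (X ω).im * (Y ω).im) μ := by
    exact hii.integrable_mul hXi hYi
  have err : ∫ ω, (X ω).re * (Y ω).re ∂μ = (∫ ω, (X ω).re ∂μ) * ∫ ω, (Y ω).re ∂μ := by
    simpa [Pi.mul_apply] using hrr.integral_fun_mul_eq_mul_integral hXr.aestronglyMeasurable hYr.aestronglyMeasurable
  have eri : ∫ ω, (X ω).re * (Y ω).im ∂μ = (∫ ω, (X ω).re ∂μ) * ∫ ω, (Y ω).im ∂μ := by
    simpa [Pi.mul_apply] using hri.integral_fun_mul_eq_mul_integral hXr.aestronglyMeasurable hYi.aestronglyMeasurable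
  have eir : ∫ ω, (X ω).im * (Y ω).re ∂μ = (∫ ω, (X ω).im ∂μ) * ∫ ω, (Y ω).re ∂μ := by
    simpa [Pi.mul_apply] using hir.integral_fun_mul_eq_mul_integral hXi.aestronglyMeasurable hYr.aestronglyMeasurable
  have eii : ∫ ω, (X ω).im * (Y ω).im ∂μ = (∫ ω, (X ω).im ∂μ) * ∫ ω, (Y ω).im ∂μ := by
    simpa [Pi.mul_apply] using hii.integral_fun_mul_eq_mul_integral hXi.aestronglyMeasurable hYi.aestronglyMeasurable
  have hmul : Integrable (fun ω => X ω * Y ω) μ := hXY.integrable_mul hX hY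
  have hXre : ∫ ω, (X ω).re ∂μ = (∫ ω, X ω ∂μ).re := by
    simpa [RCLike.re_to_complex] using integral_re hX
  have hYre : ∫ ω, (Y ω).re ∂μ = (∫ ω, Y ω ∂μ).re := by
    simpa [RCLike.re_to_complex] using integral_re hY
  have hXim : ∫ ω, (X ω).im ∂μ = (∫ ω, X ω ∂μ).im := by
    simpa [RCLike.im_to_complex] using integral_im hX
  have hYim : ∫ ω, (Y ω).im ∂μ = (∫ ω, Y ω ∂μ).im := by
    simpa [RCLike.im_to_complex] using integral_im hY
  apply Complex.ext
  · rw [← RCLike.re_to_complex, ← integral_re hmul]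
    have : ∀ ω, RCLike.re (X ω * Y ω) = (X ω).re * (Y ω).re - (X ω).im * (Y ω).im := by
      intro ω; simp [RCLike.re_to_complex, Complex.mul_re]
    rw [integral_congr_ae (Filter.Eventually.of_forall this), integral_sub irr iii,
      err, eii, hXre, hYre, hXim, hYim, Complex.mul_re]
  · rw [← RCLike.im_to_complex, ← integral_im hmul]
    have : ∀ ω, RCLike.im (X ω * Y ω) = (X ω).re * (Y ω).im + (X ω).im * (Y ω).re := by
      intro ω; simp [RCLike.im_to_complex, Complex.mul_im]
    rw [integral_congr_ae (Filter.Eventually.of_forall this), integral_add iri iir,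
      eri, eir, hXre, hYre, hXim, hYim, Complex.mul_im]

lemma integrable_conj'' {Ω : Type*} [MeasurableSpace Ω] {μ : Measure Ω} {f : Ω → ℂ}
    (hf : Integrable f μ) : Integrable (fun ω => (starRingEnd ℂ) (f ω)) μ :=
  (LinearIsometryEquiv.integrable_comp_iff (RCLike.conjLIE (K := ℂ))).mpr hf

lemma unit_mul_conj {z : ℂ} (hz : ‖z‖ = 1) : z * (starRingEnd ℂ) z = 1 := by
  rw [Complex.mul_conj, Complex.normSq_eq_norm_sq, hz]
  norm_num

lemma re_mul_conj (z : ℂ) : (z * (starRingEnd ℂ) z).re = ‖z‖ ^ 2 := by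
  rw [Complex.mul_conj]
  simp [Complex.normSq_eq_norm_sq, ← Complex.ofReal_pow]

/-- Proposition 1 of the paper (single-AP, single-subarea form): under Rician
fading, the expected received channel power `E[‖hᴴ Θ G‖²]` equals
`γ₁ |h̄ᴴ Θ a|² M + γ₂ M N` with `γ₁ = εδ/((ε+1)(δ+1))` and `γ₂ = 1 - γ₁`. -/
theorem stmt_16 {Ω : Type*} [MeasurableSpace Ω] (μ : Measure Ω)
    [IsProbabilityMeasure μ] (N M : ℕ) (hN : 1 ≤ N) (hM : 1 ≤ M)
    (ε δ : ℝ) (hε : 0 ≤ ε) (hδ : 0 ≤ δ)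
    (hbar : Fin N → ℂ) (hhbar : ∀ n, ‖hbar n‖ = 1)
    (a : Fin N → ℂ) (ha : ∀ n, ‖a n‖ = 1)
    (b : Fin M → ℂ) (hb : ∀ m, ‖b m‖ = 1)
    (θ : Fin N → ℝ)
    (htil : Ω → Fin N → ℂ) (Gtil : Ω → Fin N → Fin M → ℂ)
    (hindep : ProbabilityTheory.IndepFun htil Gtil μ)
    (hint_h : ∀ n, Integrable (fun ω => htil ω n) μ)
    (hint_G : ∀ n m, Integrable (fun ω => Gtil ω n m) μ)
    (hint_hh : ∀ n n',
      Integrable (fun ω => htil ω n * (starRingEnd ℂ) (htil ω n')) μ)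
    (hint_hh' : ∀ n n', Integrable (fun ω => htil ω n * htil ω n') μ)
    (hint_GG : ∀ n m n' m',
      Integrable (fun ω => Gtil ω n m * (starRingEnd ℂ) (Gtil ω n' m')) μ)
    (hint_GG' : ∀ n m n' m',
      Integrable (fun ω => Gtil ω n m * Gtil ω n' m') μ)
    (hmean_h : ∀ n, ∫ ω, htil ω n ∂μ = 0)
    (hmean_G : ∀ n m, ∫ ω, Gtil ω n m ∂μ = 0)
    (hcov_h : ∀ n n', ∫ ω, htil ω n * (starRingEnd ℂ) (htil ω n') ∂μ =
      if n = n' then 1 else 0)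
    (hcov_G : ∀ n m n' m',
      ∫ ω, Gtil ω n m * (starRingEnd ℂ) (Gtil ω n' m') ∂μ =
        if (n, m) = (n', m') then 1 else 0)
    (hpcov_h : ∀ n n', n ≠ n' → ∫ ω, htil ω n * htil ω n' ∂μ = 0)
    (hpcov_G : ∀ n m n' m', (n, m) ≠ (n', m') →
      ∫ ω, Gtil ω n m * Gtil ω n' m' ∂μ = 0)
    (h : Ω → Fin N → ℂ)
    (hdef : ∀ ω n, h ω n =
      (Real.sqrt (ε / (ε + 1)) : ℝ) * hbar n +
        (Real.sqrt (1 / (ε + 1)) : ℝ) * htil ω n)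
    (G : Ω → Fin N → Fin M → ℂ)
    (hGdef : ∀ ω n m, G ω n m =
      (Real.sqrt (δ / (δ + 1)) : ℝ) * (a n * (starRingEnd ℂ) (b m)) +
        (Real.sqrt (1 / (δ + 1)) : ℝ) * Gtil ω n m) :
    ∫ ω, ∑ m, ‖∑ n, (starRingEnd ℂ) (h ω n) *
        Complex.exp (Complex.I * θ n) * G ω n m‖ ^ 2 ∂μ =
      (ε * δ / ((ε + 1) * (δ + 1))) *
          ‖∑ n, (starRingEnd ℂ) (hbar n) *
            Complex.exp (Complex.I * θ n) * a n‖ ^ 2 * M +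
        (1 - ε * δ / ((ε + 1) * (δ + 1))) * M * N := by
  classical
  have hε1 : (0:ℝ) < ε + 1 := by linarith
  have hδ1 : (0:ℝ) < δ + 1 := by linarith
  set c1 : ℂ := ((Real.sqrt (ε / (ε + 1)) : ℝ) : ℂ) with hc1
  set s1 : ℂ := ((Real.sqrt (1 / (ε + 1)) : ℝ) : ℂ) with hs1
  set c2 : ℂ := ((Real.sqrt (δ / (δ + 1)) : ℝ) : ℂ) with hc2
  set s2 : ℂ := ((Real.sqrt (1 / (δ + 1)) : ℝ) : ℂ) with hs2
  have c1sq : c1 * c1 = ((ε / (ε + 1) : ℝ) : ℂ) := by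
    rw [hc1, ← Complex.ofReal_mul, Real.mul_self_sqrt (div_nonneg hε hε1.le)]
  have s1sq : s1 * s1 = ((1 / (ε + 1) : ℝ) : ℂ) := by
    rw [hs1, ← Complex.ofReal_mul, Real.mul_self_sqrt (div_nonneg zero_le_one hε1.le)]
  have c2sq : c2 * c2 = ((δ / (δ + 1) : ℝ) : ℂ) := by
    rw [hc2, ← Complex.ofReal_mul, Real.mul_self_sqrt (div_nonneg hδ hδ1.le)]
  have s2sq : s2 * s2 = ((1 / (δ + 1) : ℝ) : ℂ) := by
    rw [hs2, ← Complex.ofReal_mul, Real.mul_self_sqrt (div_nonneg zero_le_one hδ1.le)]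
  let E : Fin N → ℂ := fun n => Complex.exp (Complex.I * (θ n : ℂ))
  show ∫ ω, ∑ m, ‖∑ n, (starRingEnd ℂ) (h ω n) * E n * G ω n m‖ ^ 2 ∂μ =
      (ε * δ / ((ε + 1) * (δ + 1))) *
          ‖∑ n, (starRingEnd ℂ) (hbar n) * E n * a n‖ ^ 2 * M +
        (1 - ε * δ / ((ε + 1) * (δ + 1))) * M * N
  have hEnorm : ∀ n, ‖E n‖ = 1 := by
    intro n
    simp [E, Complex.norm_exp, Complex.mul_re]
  have hE1 : ∀ n, E n * (starRingEnd ℂ) (E n) = 1 := fun n => unit_mul_conj (hEnorm n)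
  have hhbar1 : ∀ n, (starRingEnd ℂ) (hbar n) * hbar n = 1 := fun n => by
    rw [mul_comm]; exact unit_mul_conj (hhbar n)
  have ha1 : ∀ n, a n * (starRingEnd ℂ) (a n) = 1 := fun n => unit_mul_conj (ha n)
  have hb1 : ∀ m, (starRingEnd ℂ) (b m) * b m = 1 := fun m => by
    rw [mul_comm]; exact unit_mul_conj (hb m)
  -- expansion of the user-channel quadratic form
  have hXexp : ∀ n n' (ω : Ω), (starRingEnd ℂ) (h ω n) * h ω n' =
      c1 * c1 * ((starRingEnd ℂ) (hbar n) * hbar n')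
      + c1 * s1 * (starRingEnd ℂ) (hbar n) * htil ω n'
      + s1 * c1 * hbar n' * (starRingEnd ℂ) (htil ω n)
      + s1 * s1 * (starRingEnd ℂ) (htil ω n * (starRingEnd ℂ) (htil ω n')) := by
    intro n n' ω
    rw [hdef ω n, hdef ω n']
    simp only [hc1, hs1, map_add, map_mul, Complex.conj_ofReal, Complex.conj_conj]
    ring
  have hXint : ∀ n n', Integrable (fun ω => (starRingEnd ℂ) (h ω n) * h ω n') μ := by
    intro n n'
    have i1 : Integrable (fun _ : Ω => c1 * c1 * ((starRingEnd ℂ) (hbar n) * hbar n')) μ :=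
      integrable_const _
    have i2 : Integrable (fun ω => c1 * s1 * (starRingEnd ℂ) (hbar n) * htil ω n') μ :=
      (hint_h n').const_mul _
    have i3 : Integrable (fun ω => s1 * c1 * hbar n' * (starRingEnd ℂ) (htil ω n)) μ :=
      (integrable_conj'' (hint_h n)).const_mul _
    have i4 : Integrable
        (fun ω => s1 * s1 * (starRingEnd ℂ) (htil ω n * (starRingEnd ℂ) (htil ω n'))) μ :=
      (integrable_conj'' (hint_hh n n')).const_mul _
    exact (((i1.add i2).add i3).add i4).congr (ae_of_all _ fun ω => (hXexp n n' ω).symm)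
  have hXval : ∀ n n', ∫ ω, (starRingEnd ℂ) (h ω n) * h ω n' ∂μ =
      c1 * c1 * ((starRingEnd ℂ) (hbar n) * hbar n')
        + s1 * s1 * (if n = n' then 1 else 0) := by
    intro n n'
    have i1 : Integrable (fun _ : Ω => c1 * c1 * ((starRingEnd ℂ) (hbar n) * hbar n')) μ :=
      integrable_const _
    have i2 : Integrable (fun ω => c1 * s1 * (starRingEnd ℂ) (hbar n) * htil ω n') μ :=
      (hint_h n').const_mul _
    have i3 : Integrable (fun ω => s1 * c1 * hbar n' * (starRingEnd ℂ) (htil ω n)) μ :=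
      (integrable_conj'' (hint_h n)).const_mul _
    have i4 : Integrable
        (fun ω => s1 * s1 * (starRingEnd ℂ) (htil ω n * (starRingEnd ℂ) (htil ω n'))) μ :=
      (integrable_conj'' (hint_hh n n')).const_mul _
    have i12 : Integrable (fun ω => c1 * c1 * ((starRingEnd ℂ) (hbar n) * hbar n')
        + c1 * s1 * (starRingEnd ℂ) (hbar n) * htil ω n') μ := i1.add i2
    have i123 : Integrable (fun ω => c1 * c1 * ((starRingEnd ℂ) (hbar n) * hbar n')
        + c1 * s1 * (starRingEnd ℂ) (hbar n) * htil ω n'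
        + s1 * c1 * hbar n' * (starRingEnd ℂ) (htil ω n)) μ := i12.add i3
    rw [integral_congr_ae (ae_of_all _ (hXexp n n')),
      integral_add i123 i4, integral_add i12 i3, integral_add i1 i2,
      integral_const, integral_const_mul, integral_const_mul, integral_const_mul,
      hmean_h n', integral_conj, hmean_h n, integral_conj, hcov_h n n']
    simp [apply_ite (starRingEnd ℂ), measure_univ]
  -- expansion of the IRS-channel quadratic form
  have hYexp : ∀ n n' m (ω : Ω), G ω n m * (starRingEnd ℂ) (G ω n' m) =
      c2 * c2 * ((a n * (starRingEnd ℂ) (a n')) * ((starRingEnd ℂ) (b m) * b m))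
      + c2 * s2 * (a n * (starRingEnd ℂ) (b m)) * (starRingEnd ℂ) (Gtil ω n' m)
      + s2 * c2 * ((starRingEnd ℂ) (a n') * b m) * Gtil ω n m
      + s2 * s2 * (Gtil ω n m * (starRingEnd ℂ) (Gtil ω n' m)) := by
    intro n n' m ω
    rw [hGdef ω n m, hGdef ω n' m]
    simp only [hc2, hs2, map_add, map_mul, Complex.conj_ofReal, Complex.conj_conj]
    ring
  have hYint : ∀ n n' m, Integrable (fun ω => G ω n m * (starRingEnd ℂ) (G ω n' m)) μ := by
    intro n n' m
    have i1 : Integrable (fun _ : Ω =>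
        c2 * c2 * ((a n * (starRingEnd ℂ) (a n')) * ((starRingEnd ℂ) (b m) * b m))) μ :=
      integrable_const _
    have i2 : Integrable
        (fun ω => c2 * s2 * (a n * (starRingEnd ℂ) (b m)) * (starRingEnd ℂ) (Gtil ω n' m)) μ :=
      (integrable_conj'' (hint_G n' m)).const_mul _
    have i3 : Integrable (fun ω => s2 * c2 * ((starRingEnd ℂ) (a n') * b m) * Gtil ω n m) μ :=
      (hint_G n m).const_mul _
    have i4 : Integrable
        (fun ω => s2 * s2 * (Gtil ω n m * (starRingEnd ℂ) (Gtil ω n' m))) μ :=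
      (hint_GG n m n' m).const_mul _
    exact (((i1.add i2).add i3).add i4).congr (ae_of_all _ fun ω => (hYexp n n' m ω).symm)
  have hYval : ∀ n n' m, ∫ ω, G ω n m * (starRingEnd ℂ) (G ω n' m) ∂μ =
      c2 * c2 * (a n * (starRingEnd ℂ) (a n'))
        + s2 * s2 * (if n = n' then 1 else 0) := by
    intro n n' m
    have i1 : Integrable (fun _ : Ω =>
        c2 * c2 * ((a n * (starRingEnd ℂ) (a n')) * ((starRingEnd ℂ) (b m) * b m))) μ :=
      integrable_const _
    have i2 : Integrable
        (fun ω => c2 * s2 * (a n * (starRingEnd ℂ) (b m)) * (starRingEnd ℂ) (Gtil ω n' m)) μ :=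
      (integrable_conj'' (hint_G n' m)).const_mul _
    have i3 : Integrable (fun ω => s2 * c2 * ((starRingEnd ℂ) (a n') * b m) * Gtil ω n m) μ :=
      (hint_G n m).const_mul _
    have i4 : Integrable
        (fun ω => s2 * s2 * (Gtil ω n m * (starRingEnd ℂ) (Gtil ω n' m))) μ :=
      (hint_GG n m n' m).const_mul _
    have i12 : Integrable (fun ω =>
        c2 * c2 * ((a n * (starRingEnd ℂ) (a n')) * ((starRingEnd ℂ) (b m) * b m))
        + c2 * s2 * (a n * (starRingEnd ℂ) (b m)) * (starRingEnd ℂ) (Gtil ω n' m)) μ := i1.add i2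
    have i123 : Integrable (fun ω =>
        c2 * c2 * ((a n * (starRingEnd ℂ) (a n')) * ((starRingEnd ℂ) (b m) * b m))
        + c2 * s2 * (a n * (starRingEnd ℂ) (b m)) * (starRingEnd ℂ) (Gtil ω n' m)
        + s2 * c2 * ((starRingEnd ℂ) (a n') * b m) * Gtil ω n m) μ := i12.add i3
    rw [integral_congr_ae (ae_of_all _ (hYexp n n' m)),
      integral_add i123 i4, integral_add i12 i3, integral_add i1 i2,
      integral_const, integral_const_mul, integral_const_mul, integral_const_mul,
      hmean_G n m, integral_conj, hmean_G n' m, hcov_G n m n' m, hb1 m]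
    simp [measure_univ, Prod.ext_iff]
  -- independence of the two quadratic forms
  have hindepXY : ∀ n n' m, ProbabilityTheory.IndepFun
      (fun ω => (starRingEnd ℂ) (h ω n) * h ω n')
      (fun ω => G ω n m * (starRingEnd ℂ) (G ω n' m)) μ := by
    intro n n' m
    have hφ : Measurable (fun v : Fin N → ℂ =>
        (starRingEnd ℂ) (c1 * hbar n + s1 * v n) * (c1 * hbar n' + s1 * v n')) :=
      (Complex.continuous_conj.measurable.comp
          (measurable_const.add (by fun_prop : Measurable fun v : Fin N → ℂ => s1 * v n))).mul
        (measurable_const.add (by fun_prop : Measurable fun v : Fin N → ℂ => s1 * v n'))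
    have hψ : Measurable (fun v : Fin N → Fin M → ℂ =>
        (c2 * (a n * (starRingEnd ℂ) (b m)) + s2 * v n m) *
          (starRingEnd ℂ) (c2 * (a n' * (starRingEnd ℂ) (b m)) + s2 * v n' m)) := by
      have hm1 : Measurable fun v : Fin N → Fin M → ℂ => v n m :=
        (measurable_pi_apply m).comp (measurable_pi_apply n)
      have hm2 : Measurable fun v : Fin N → Fin M → ℂ => v n' m :=
        (measurable_pi_apply m).comp (measurable_pi_apply n')
      exact (measurable_const.add (hm1.const_mul s2)).mul
        (Complex.continuous_conj.measurable.comp (measurable_const.add (hm2.const_mul s2)))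
    have hcomp := hindep.comp hφ hψ
    have e1 : (fun v : Fin N → ℂ =>
        (starRingEnd ℂ) (c1 * hbar n + s1 * v n) * (c1 * hbar n' + s1 * v n')) ∘ htil =
        fun ω => (starRingEnd ℂ) (h ω n) * h ω n' := by
      funext ω
      simp only [Function.comp_apply]
      rw [hdef ω n, hdef ω n']
    have e2 : (fun v : Fin N → Fin M → ℂ =>
        (c2 * (a n * (starRingEnd ℂ) (b m)) + s2 * v n m) *
          (starRingEnd ℂ) (c2 * (a n' * (starRingEnd ℂ) (b m)) + s2 * v n' m)) ∘ Gtil =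
        fun ω => G ω n m * (starRingEnd ℂ) (G ω n' m) := by
      funext ω
      simp only [Function.comp_apply]
      rw [hGdef ω n m, hGdef ω n' m]
    rwa [e1, e2] at hcomp
  -- integrability of each cross term
  have hTint : ∀ n n' m, Integrable (fun ω => (E n * (starRingEnd ℂ) (E n')) *
      (((starRingEnd ℂ) (h ω n) * h ω n') * (G ω n m * (starRingEnd ℂ) (G ω n' m)))) μ := by
    intro n n' m
    exact ((hindepXY n n' m).integrable_mul (hXint n n') (hYint n n' m)).const_mul _
  -- pointwise identity
  have hkey : ∀ ω, (∑ m, ‖∑ n, (starRingEnd ℂ) (h ω n) * E n * G ω n m‖ ^ 2 : ℝ) =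
      (∑ m, ∑ n, ∑ n', (E n * (starRingEnd ℂ) (E n')) *
        (((starRingEnd ℂ) (h ω n) * h ω n') *
          (G ω n m * (starRingEnd ℂ) (G ω n' m)))).re := by
    intro ω
    rw [Complex.re_sum]
    refine Finset.sum_congr rfl fun m _ => ?_
    rw [← re_mul_conj]
    congr 1
    rw [map_sum, Finset.sum_mul_sum]
    refine Finset.sum_congr rfl fun n _ => Finset.sum_congr rfl fun n' _ => ?_
    simp only [map_mul, Complex.conj_conj]
    ring
  have hFint : Integrable (fun ω => ∑ m, ∑ n, ∑ n',
      (E n * (starRingEnd ℂ) (E n')) * (((starRingEnd ℂ) (h ω n) * h ω n') *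
        (G ω n m * (starRingEnd ℂ) (G ω n' m)))) μ :=
    integrable_finset_sum _ fun m _ => integrable_finset_sum _ fun n _ =>
      integrable_finset_sum _ fun n' _ => hTint n n' m
  rw [integral_congr_ae (ae_of_all _ hkey)]
  have hre : ∫ ω, (∑ m, ∑ n, ∑ n', (E n * (starRingEnd ℂ) (E n')) *
      (((starRingEnd ℂ) (h ω n) * h ω n') *
        (G ω n m * (starRingEnd ℂ) (G ω n' m)))).re ∂μ =
      (∫ ω, ∑ m, ∑ n, ∑ n', (E n * (starRingEnd ℂ) (E n')) *
      (((starRingEnd ℂ) (h ω n) * h ω n') *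
        (G ω n m * (starRingEnd ℂ) (G ω n' m))) ∂μ).re := by
    simpa [RCLike.re_to_complex] using integral_re hFint
  rw [hre]
  -- swap the integral with the sums and evaluate each term
  have hswap : (∫ ω, ∑ m, ∑ n, ∑ n', (E n * (starRingEnd ℂ) (E n')) *
      (((starRingEnd ℂ) (h ω n) * h ω n') *
        (G ω n m * (starRingEnd ℂ) (G ω n' m))) ∂μ) =
      ∑ m : Fin M, ∑ n, ∑ n', (E n * (starRingEnd ℂ) (E n')) *
        ((c1 * c1 * ((starRingEnd ℂ) (hbar n) * hbar n')
            + s1 * s1 * (if n = n' then 1 else 0)) *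
         (c2 * c2 * (a n * (starRingEnd ℂ) (a n'))
            + s2 * s2 * (if n = n' then 1 else 0))) := by
    rw [integral_finset_sum _ (fun m _ => integrable_finset_sum _ fun n _ =>
      integrable_finset_sum _ fun n' _ => hTint n n' m)]
    refine Finset.sum_congr rfl fun m _ => ?_
    rw [integral_finset_sum _ (fun n _ => integrable_finset_sum _ fun n' _ => hTint n n' m)]
    refine Finset.sum_congr rfl fun n _ => ?_
    rw [integral_finset_sum _ (fun n' _ => hTint n n' m)]
    refine Finset.sum_congr rfl fun n' _ => ?_
    rw [integral_const_mul,
      indep_integral_mul_c (hindepXY n n' m) (hXint n n') (hYint n n' m),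
      hXval n n', hYval n n' m]
  rw [hswap]
  -- algebraic evaluation of the triple sum
  set S : ℂ := ∑ n, (starRingEnd ℂ) (hbar n) * E n * a n with hS
  have hconjS : (∑ n, hbar n * (starRingEnd ℂ) (E n) * (starRingEnd ℂ) (a n)) =
      (starRingEnd ℂ) S := by
    rw [hS, map_sum]
    exact Finset.sum_congr rfl fun n _ => by
      simp only [map_mul, Complex.conj_conj]
  have hterm : ∀ n n', (E n * (starRingEnd ℂ) (E n')) *
      ((c1 * c1 * ((starRingEnd ℂ) (hbar n) * hbar n')
          + s1 * s1 * (if n = n' then 1 else 0)) *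
       (c2 * c2 * (a n * (starRingEnd ℂ) (a n'))
          + s2 * s2 * (if n = n' then 1 else 0))) =
      (c1 * c1 * (c2 * c2)) *
        (((starRingEnd ℂ) (hbar n) * E n * a n) *
          (hbar n' * (starRingEnd ℂ) (E n') * (starRingEnd ℂ) (a n')))
      + (if n = n' then
          (c1 * c1 * (s2 * s2)) *
              (((starRingEnd ℂ) (hbar n) * hbar n') * (E n * (starRingEnd ℂ) (E n')))
          + (s1 * s1 * (c2 * c2)) *
              ((a n * (starRingEnd ℂ) (a n')) * (E n * (starRingEnd ℂ) (E n')))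
          + (s1 * s1 * (s2 * s2)) * (E n * (starRingEnd ℂ) (E n'))
        else 0) := by
    intro n n'
    by_cases hnn : n = n'
    · subst hnn
      simp only [eq_self_iff_true, if_true]
      ring
    · simp only [if_neg hnn]
      ring
  have hinner : ∀ m : Fin M, (∑ n, ∑ n', (E n * (starRingEnd ℂ) (E n')) *
      ((c1 * c1 * ((starRingEnd ℂ) (hbar n) * hbar n')
          + s1 * s1 * (if n = n' then 1 else 0)) *
       (c2 * c2 * (a n * (starRingEnd ℂ) (a n'))
          + s2 * s2 * (if n = n' then 1 else 0)))) =
      (c1 * c1 * (c2 * c2)) * (S * (starRingEnd ℂ) S)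
        + (N : ℂ) * (c1 * c1 * (s2 * s2) + s1 * s1 * (c2 * c2) + s1 * s1 * (s2 * s2)) := by
    intro m
    simp only [hterm]
    rw [Finset.sum_congr rfl fun n _ => Finset.sum_add_distrib, Finset.sum_add_distrib]
    congr 1
    · simp only [← Finset.mul_sum]
      rw [← Finset.sum_mul, hconjS, ← hS]
    · have : ∀ n : Fin N, (∑ n', if n = n' then
          (c1 * c1 * (s2 * s2)) *
              (((starRingEnd ℂ) (hbar n) * hbar n') * (E n * (starRingEnd ℂ) (E n')))
          + (s1 * s1 * (c2 * c2)) *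
              ((a n * (starRingEnd ℂ) (a n')) * (E n * (starRingEnd ℂ) (E n')))
          + (s1 * s1 * (s2 * s2)) * (E n * (starRingEnd ℂ) (E n'))
        else 0) =
          c1 * c1 * (s2 * s2) + s1 * s1 * (c2 * c2) + s1 * s1 * (s2 * s2) := by
        intro n
        rw [Finset.sum_ite_eq]
        simp [hhbar1 n, ha1 n, hE1 n]
      rw [Finset.sum_congr rfl fun n _ => this n]
      simp only [Finset.sum_const, Finset.card_univ, Fintype.card_fin, nsmul_eq_mul]
  rw [Finset.sum_congr rfl fun m _ => hinner m]
  rw [Finset.sum_const, Finset.card_univ, Fintype.card_fin, nsmul_eq_mul]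
  -- final real computation
  have hSsq : S * (starRingEnd ℂ) S = ((‖S‖ ^ 2 : ℝ) : ℂ) := by
    rw [Complex.mul_conj, Complex.normSq_eq_norm_sq]
  rw [hSsq, c1sq, s1sq, c2sq, s2sq]
  have hcast : ((M : ℂ) * ((((ε / (ε + 1) : ℝ) : ℂ) * ((δ / (δ + 1) : ℝ) : ℂ)) *
      ((‖S‖ ^ 2 : ℝ) : ℂ) + (N : ℂ) * (((ε / (ε + 1) : ℝ) : ℂ) * ((1 / (δ + 1) : ℝ) : ℂ)
        + ((1 / (ε + 1) : ℝ) : ℂ) * ((δ / (δ + 1) : ℝ) : ℂ)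
        + ((1 / (ε + 1) : ℝ) : ℂ) * ((1 / (δ + 1) : ℝ) : ℂ)))) =
      (((M : ℝ) * ((ε / (ε + 1)) * (δ / (δ + 1)) * ‖S‖ ^ 2 +
        (N : ℝ) * ((ε / (ε + 1)) * (1 / (δ + 1)) + (1 / (ε + 1)) * (δ / (δ + 1))
          + (1 / (ε + 1)) * (1 / (δ + 1)))) : ℝ) : ℂ) := by
    push_cast
    ring
  rw [hcast, Complex.ofReal_re]
  have : (M : ℝ) * ((ε / (ε + 1)) * (δ / (δ + 1)) * ‖S‖ ^ 2 +
      (N : ℝ) * ((ε / (ε + 1)) * (1 / (δ + 1)) + (1 / (ε + 1)) * (δ / (δ + 1))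
        + (1 / (ε + 1)) * (1 / (δ + 1)))) =
      (ε * δ / ((ε + 1) * (δ + 1))) * ‖S‖ ^ 2 * (M : ℝ) +
        (1 - ε * δ / ((ε + 1) * (δ + 1))) * (M : ℝ) * (N : ℝ) := by
    field_simp
    ring
  rw [this]
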